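/- Let d be even and P(s,t) = s^{d/2} t^{d/2}. Then there are constants c, δ₀ > 0 such that for all 0 < δ < δ₀, the Lebesgue measure of {(s,t) ∈ [−1,1]² : |P(s,t)| < δ} is at least c · δ^{2/d} · log(1/δ). Hence the logarithmic factor in the sublevel set estimate |{|P| < δ}| ≲ δ^{2/d} log(1/δ) for binary forms with all roots of multiplicity ≤ d/2 cannot be removed in general. -/

import Mathlib

open MeasureTheory

/-- **Sharpness of the logarithmic factor.** For even `d ≥ 2` and
`P(s,t) = s^{d/2} t^{d/2}`, the sublevel set `{(s,t) ∈ [−1,1]² : |P(s,t)| < δ}` has measure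
at least `c · δ^{2/d} · log(1/δ)` for all sufficiently small `δ > 0`. -/
theorem log_loss_sharp (d : ℕ) (hd : 0 < d) (he : Even d) :
    ∃ c δ₀ : ℝ, 0 < c ∧ 0 < δ₀ ∧ ∀ δ : ℝ, 0 < δ → δ < δ₀ →
      ENNReal.ofReal (c * δ ^ ((2 : ℝ) / (d : ℝ)) * Real.log (1 / δ)) ≤
        volume {p : ℝ × ℝ | p.1 ∈ Set.Icc (-1 : ℝ) 1 ∧ p.2 ∈ Set.Icc (-1 : ℝ) 1 ∧
          |p.1 ^ (d / 2) * p.2 ^ (d / 2)| < δ} := by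
  obtain ⟨m, hm⟩ := he
  have hd2 : d = 2 * m := by omega
  have hm0 : 0 < m := by omega
  have hdR : (0 : ℝ) < d := by exact_mod_cast hd
  refine ⟨4 / d, 1, by positivity, by norm_num, ?_⟩
  intro δ hδ hδ1
  set a : ℝ := δ ^ ((2 : ℝ) / (d : ℝ)) with ha
  have ha0 : 0 < a := Real.rpow_pos_of_pos hδ _
  have ha1 : a < 1 := Real.rpow_lt_one hδ.le hδ1 (by positivity)
  have ham : a ^ m = δ := by
    rw [ha, ← Real.rpow_natCast (δ ^ ((2:ℝ)/(d:ℝ))) m, ← Real.rpow_mul hδ.le]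
    have : (2 : ℝ) / (d : ℝ) * (m : ℝ) = 1 := by
      have : (d : ℝ) = 2 * (m : ℝ) := by exact_mod_cast congrArg Nat.cast hd2
      field_simp [this]
      linarith [this]
    rw [this, Real.rpow_one]
  have hdm : d / 2 = m := by omega
  -- the region between ±a/x over Ioc a 1
  set S := regionBetween (fun x : ℝ => -(a / x)) (fun x : ℝ => a / x) (Set.Ioc a 1) with hS
  have hsub : S ⊆ {p : ℝ × ℝ | p.1 ∈ Set.Icc (-1 : ℝ) 1 ∧ p.2 ∈ Set.Icc (-1 : ℝ) 1 ∧
      |p.1 ^ (d / 2) * p.2 ^ (d / 2)| < δ} := by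
    rintro ⟨x, y⟩ ⟨hx, hy⟩
    simp only [Set.mem_Ioc] at hx
    simp only [Set.mem_Ioo] at hy
    have hx0 : 0 < x := lt_trans ha0 hx.1
    have hyabs : |y| < a / x := abs_lt.2 ⟨hy.1, hy.2⟩
    have hax : a / x < 1 := (div_lt_one hx0).2 hx.1
    refine ⟨⟨by linarith, hx.2⟩, ⟨by nlinarith [abs_nonneg y, neg_abs_le y], by
      nlinarith [abs_nonneg y, le_abs_self y]⟩, ?_⟩
    have hkey : x * |y| < a := by
      have := (lt_div_iff₀ hx0).1 hyabs
      linarith [this]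
    have : |x ^ (d/2) * y ^ (d/2)| = (x * |y|) ^ m := by
      rw [hdm, abs_mul, abs_pow, abs_pow, abs_of_pos hx0, ← mul_pow]
    rw [this, ← ham]
    exact pow_lt_pow_left₀ hkey (by positivity) hm0.ne'
  have hmeas : MeasurableSet (Set.Ioc a (1:ℝ)) := measurableSet_Ioc
  have hcont : ContinuousOn (fun x : ℝ => a / x) (Set.Icc a 1) := by
    apply ContinuousOn.div continuousOn_const continuousOn_id
    intro x hx; exact (lt_of_lt_of_le ha0 hx.1).ne'
  have hint : IntegrableOn (fun x : ℝ => a / x) (Set.Ioc a 1) := by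
    exact (hcont.integrableOn_Icc).mono_set Set.Ioc_subset_Icc_self
  have hintneg : IntegrableOn (fun x : ℝ => -(a / x)) (Set.Ioc a 1) := hint.neg
  have hvol : volume S = ENNReal.ofReal (∫ y in Set.Ioc a 1,
      ((fun x : ℝ => a / x) - (fun x : ℝ => -(a / x))) y) := by
    rw [hS, Measure.volume_eq_prod]
    exact volume_regionBetween_eq_integral hintneg hint hmeas
      (fun x hx => by
        have hx0 : 0 < x := lt_trans ha0 hx.1
        have : 0 < a / x := by positivity
        linarith)
  have hIoc : (∫ y in Set.Ioc a 1,
      ((fun x : ℝ => a / x) - (fun x : ℝ => -(a / x))) y) = 2 * a * Real.log (1 / a) := by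
    have : (∫ y in Set.Ioc a 1,
        ((fun x : ℝ => a / x) - (fun x : ℝ => -(a / x))) y)
        = ∫ y in Set.Ioc a 1, 2 * a * (1 / y) := by
      apply setIntegral_congr_fun measurableSet_Ioc
      intro y hy
      have hy0 : 0 < y := lt_trans ha0 hy.1
      simp only [Pi.sub_apply]
      field_simp
      ring
    rw [this, ← intervalIntegral.integral_of_le ha1.le,
      intervalIntegral.integral_const_mul, integral_one_div
        (by rw [Set.uIcc_of_le ha1.le]; exact fun h => absurd h.1 (not_le.2 ha0))]
  have hla : Real.log (1 / a) = (2 / (d:ℝ)) * Real.log (1 / δ) := by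
    rw [one_div, Real.log_inv, one_div, Real.log_inv, ha, Real.log_rpow hδ]
    ring
  calc ENNReal.ofReal (4 / (d:ℝ) * δ ^ ((2 : ℝ) / (d : ℝ)) * Real.log (1 / δ))
      = volume S := by
        rw [hvol, hIoc, hla, ha]; ring_nf
    _ ≤ _ := measure_mono hsub
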